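/- Let M be a matroid on a finite ground set V, and let (V,w) be a weighted graph. Let x ∈ ℝ^V lie in the convex hull of the indicator vectors {χ_B : B a base of M}. Then there exists a base B of M such that δ_w(B) ≥ Σ_{{u,v}} w(u,v)·(x_u + x_v − 2 x_u x_v), the sum over unordered pairs of distinct vertices. (No integrality gap of the quadratic program over the matroid base polytope, via pipage rounding; used in the proof of Theorem 1.3.) -/

import Mathlib

open Finset

/-- The cut value of a set `S`: total weight of pairs with exactly one endpoint in `S`. -/
noncomputable def cutVal {V : Type*} [Fintype V] [DecidableEq V]
    (w : V → V → ℝ) (S : Finset V) : ℝ :=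
  ∑ u ∈ S, ∑ v ∈ Sᶜ, w u v

/-- The quadratic cut objective `Σ_{{u,v}} w(u,v)·(x_u + x_v − 2 x_u x_v)`, summed over
unordered pairs of distinct vertices. -/
noncomputable def quadCut {V : Type*} [Fintype V] [DecidableEq V]
    (w : V → V → ℝ) (x : V → ℝ) : ℝ :=
  (∑ u, ∑ v ∈ Finset.univ.erase u, w u v * (x u + x v - 2 * x u * x v)) / 2

section Aux

open Set in
/-- Symmetric basis exchange for matroids. -/
lemma symm_exchange_aux {α : Type*} {M : Matroid α} {B₁ B₂ : Set α}
    (hB₁ : M.IsBase B₁) (hB₂ : M.IsBase B₂) (hfin : B₂.Finite) {u : α} (hu : u ∈ B₁ \ B₂) :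
    ∃ v ∈ B₂ \ B₁, M.IsBase (insert v (B₁ \ {u})) ∧ M.IsBase (insert u (B₂ \ {v})) := by
  have hI₁ := hB₁.indep
  have hI₂ := hB₂.indep
  have huE : u ∈ M.E := hB₁.subset_ground hu.1
  have hJg : B₁ \ {u} ⊆ M.E := diff_subset.trans hB₁.subset_ground
  have hucl : u ∉ M.closure (B₁ \ {u}) := hI₁.notMem_closure_diff_of_mem hu.1
  set P : Set ℕ := {n | ∃ C : Set α, C ⊆ B₂ ∧ C.Finite ∧ C.ncard = n ∧ u ∈ M.closure C} with hP
  have hPne : P.Nonempty := ⟨B₂.ncard, B₂, Subset.rfl, hfin, rfl, by rw [hB₂.closure_eq]; exact huE⟩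
  obtain ⟨C, hCB₂, hCfin, hCcard, huC⟩ := Nat.sInf_mem hPne
  have hmin : ∀ v ∈ C, u ∉ M.closure (C \ {v}) := by
    intro v hv hmem
    have hlt : (C \ {v}).ncard < sInf P := by
      rw [← hCcard]; exact Set.ncard_diff_singleton_lt_of_mem hv hCfin
    exact (Nat.notMem_of_lt_sInf hlt) ⟨C \ {v}, diff_subset.trans hCB₂,
      hCfin.diff, rfl, hmem⟩
  have hex : ∃ v ∈ C, v ∉ M.closure (B₁ \ {u}) := by
    by_contra h
    push_neg at h
    exact hucl (Matroid.closure_subset_closure_of_subset_closure h huC)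
  obtain ⟨v, hvC, hvcl⟩ := hex
  have hvB₂ : v ∈ B₂ := hCB₂ hvC
  have hvE : v ∈ M.E := hB₂.subset_ground hvB₂
  have hvB₁ : v ∉ B₁ := by
    intro hvB₁
    have hvu : v ≠ u := fun h => hu.2 (h ▸ hvB₂)
    exact hvcl (M.subset_closure _ hJg ⟨hvB₁, hvu⟩)
  have hKg : B₂ \ {v} ⊆ M.E := diff_subset.trans hB₂.subset_ground
  have hucl₂ : u ∉ M.closure (B₂ \ {v}) := by
    intro h
    have h1 : u ∈ M.closure (insert v (C \ {v})) \ M.closure (C \ {v}) := by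
      rw [Set.insert_diff_singleton, Set.insert_eq_of_mem hvC]
      exact ⟨huC, hmin v hvC⟩
    have h2 := Matroid.closure_exchange h1
    have h3 : insert u (C \ {v}) ⊆ M.closure (B₂ \ {v}) := by
      refine Set.insert_subset h ?_
      exact (M.subset_closure _ hKg).trans' (Set.diff_subset_diff_left hCB₂) |>.trans (by rfl)
    have h4 : v ∈ M.closure (B₂ \ {v}) :=
      Matroid.closure_subset_closure_of_subset_closure h3 h2.1
    exact hI₂.notMem_closure_diff_of_mem hvB₂ h4
  have hbase₁ : M.IsBase (insert v (B₁ \ {u})) := by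
    have hvnotJ : v ∉ B₁ \ {u} := fun h => hvB₁ h.1
    have hind : M.Indep (insert v (B₁ \ {u})) :=
      ((hI₁.subset diff_subset).insert_indep_iff_of_notMem hvnotJ).2 ⟨hvE, hvcl⟩
    exact hB₁.exchange_isBase_of_indep hvB₁ hind
  have hbase₂ : M.IsBase (insert u (B₂ \ {v})) := by
    have hunotK : u ∉ B₂ \ {v} := fun h => hu.2 h.1
    have hind : M.Indep (insert u (B₂ \ {v})) :=
      ((hI₂.subset diff_subset).insert_indep_iff_of_notMem hunotK).2 ⟨huE, hucl₂⟩
    exact hB₂.exchange_isBase_of_indep hu.2 hind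
  exact ⟨v, ⟨hvB₂, hvB₁⟩, hbase₁, hbase₂⟩

variable {V : Type*} [Fintype V] [DecidableEq V]

lemma quadCut_indicator_aux (w : V → V → ℝ) (hsymm : ∀ u v, w u v = w v u) (B : Finset V) :
    quadCut w (fun v => if v ∈ B then (1 : ℝ) else 0) = cutVal w B := by
  classical
  set x : V → ℝ := fun v => if v ∈ B then (1 : ℝ) else 0 with hx
  set T : V → V → ℝ := fun s s' => w s s' * (x s + x s' - 2 * x s * x s') with hT
  have hdiag : ∀ s, T s s = 0 := by
    intro s; by_cases h : s ∈ B <;> simp only [hT, hx, if_pos, if_neg, h, if_true, if_false] <;>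
      ring
  have h1 : ∀ s : V, ∑ s' ∈ Finset.univ.erase s, T s s' = ∑ s' : V, T s s' := by
    intro s
    rw [← Finset.add_sum_erase _ _ (Finset.mem_univ s), hdiag, zero_add]
  have hsplit : ∀ (f : V → ℝ), ∑ s : V, f s = ∑ s ∈ B, f s + ∑ s ∈ Bᶜ, f s := by
    intro f; rw [Finset.sum_add_sum_compl]
  have hBB : ∀ s ∈ B, ∑ s' ∈ B, T s s' = 0 := by
    intro s hs; apply Finset.sum_eq_zero; intro s' hs'
    simp only [hT, hx, if_pos hs, if_pos hs']; ring
  have hCC : ∀ s ∈ Bᶜ, ∑ s' ∈ Bᶜ, T s s' = 0 := by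
    intro s hs; apply Finset.sum_eq_zero; intro s' hs'
    simp only [Finset.mem_compl] at hs hs'
    simp only [hT, hx, if_neg hs, if_neg hs']; ring
  have hBC : ∀ s ∈ B, ∑ s' ∈ Bᶜ, T s s' = ∑ s' ∈ Bᶜ, w s s' := by
    intro s hs; apply Finset.sum_congr rfl; intro s' hs'
    simp only [Finset.mem_compl] at hs'
    simp only [hT, hx, if_pos hs, if_neg hs']; ring
  have hCB : ∀ s ∈ Bᶜ, ∑ s' ∈ B, T s s' = ∑ s' ∈ B, w s s' := by
    intro s hs; apply Finset.sum_congr rfl; intro s' hs'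
    simp only [Finset.mem_compl] at hs
    simp only [hT, hx, if_neg hs, if_pos hs']; ring
  have step3 : ∑ s ∈ B, ∑ s' : V, T s s' = ∑ s ∈ B, ∑ s' ∈ Bᶜ, w s s' :=
    Finset.sum_congr rfl fun s hs => by
      rw [hsplit (fun s' => T s s'), hBB s hs, hBC s hs, zero_add]
  have step4 : ∑ s ∈ Bᶜ, ∑ s' : V, T s s' = ∑ s ∈ B, ∑ s' ∈ Bᶜ, w s s' := by
    have : ∑ s ∈ Bᶜ, ∑ s' : V, T s s' = ∑ s ∈ Bᶜ, ∑ s' ∈ B, w s s' :=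
      Finset.sum_congr rfl fun s hs => by
        rw [hsplit (fun s' => T s s'), hCC s hs, hCB s hs, add_zero]
    rw [this, Finset.sum_comm]
    exact Finset.sum_congr rfl fun s _ => Finset.sum_congr rfl fun s' _ => hsymm _ _
  have : quadCut w x = (∑ s : V, ∑ s' : V, T s s') / 2 := by
    rw [quadCut]
    congr 1
    exact Finset.sum_congr rfl fun s _ => h1 s
  rw [this, hsplit (fun s => ∑ s' : V, T s s'), step3, step4, cutVal]
  ring

lemma quadCut_poly_aux (w : V → V → ℝ) (hsymm : ∀ u v, w u v = w v u)
    (x : V → ℝ) (u v : V) (huv : u ≠ v) (d : V → ℝ)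
    (hdu : d u = -1) (hdv : d v = 1) (hd0 : ∀ s, s ≠ u → s ≠ v → d s = 0) :
    ∃ L : ℝ, ∀ t : ℝ,
      quadCut w (fun s => x s + t * d s)
        = quadCut w x + t * L + t ^ 2 * (2 * w u v) := by
  classical
  refine ⟨(∑ s, ∑ s' ∈ Finset.univ.erase s,
      w s s' * (d s + d s' - 2 * (x s * d s' + x s' * d s))) / 2, fun t => ?_⟩
  have hC : ∑ s, ∑ s' ∈ Finset.univ.erase s, (-2) * (w s s' * (d s * d s'))
      = 4 * w u v := by
    have hzero : ∀ s, s ≠ u → s ≠ v →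
        ∑ s' ∈ Finset.univ.erase s, (-2) * (w s s' * (d s * d s')) = 0 := by
      intro s h1 h2; apply Finset.sum_eq_zero; intro s' _
      rw [hd0 s h1 h2]; ring
    have hsub : ∑ s, ∑ s' ∈ Finset.univ.erase s, (-2) * (w s s' * (d s * d s'))
        = ∑ s ∈ ({u, v} : Finset V), ∑ s' ∈ Finset.univ.erase s,
            (-2) * (w s s' * (d s * d s')) := by
      refine (Finset.sum_subset (Finset.subset_univ _) ?_).symm
      intro s _ hs
      simp only [Finset.mem_insert, Finset.mem_singleton, not_or] at hs
      exact hzero s hs.1 hs.2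
    rw [hsub, Finset.sum_pair huv]
    have hgu : ∑ s' ∈ Finset.univ.erase u, (-2) * (w u s' * (d u * d s'))
        = 2 * w u v := by
      rw [Finset.sum_eq_single_of_mem v (Finset.mem_erase.2 ⟨huv.symm, Finset.mem_univ v⟩)]
      · rw [hdu, hdv]; ring
      · intro s' hs' hsv
        rw [hd0 s' (Finset.mem_erase.1 hs').1 hsv]; ring
    have hgv : ∑ s' ∈ Finset.univ.erase v, (-2) * (w v s' * (d v * d s'))
        = 2 * w v u := by
      rw [Finset.sum_eq_single_of_mem u (Finset.mem_erase.2 ⟨huv, Finset.mem_univ u⟩)]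
      · rw [hdu, hdv]; ring
      · intro s' hs' hsu
        rw [hd0 s' hsu (Finset.mem_erase.1 hs').1]; ring
    rw [hgu, hgv, hsymm v u]; ring
  have hterm : ∀ s s' : V,
      w s s' * ((x s + t * d s) + (x s' + t * d s') - 2 * (x s + t * d s) * (x s' + t * d s'))
      = w s s' * (x s + x s' - 2 * x s * x s')
        + t * (w s s' * (d s + d s' - 2 * (x s * d s' + x s' * d s)))
        + t ^ 2 * ((-2) * (w s s' * (d s * d s'))) := by
    intro s s'; ring
  have key : ∑ s, ∑ s' ∈ Finset.univ.erase s,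
      w s s' * ((x s + t * d s) + (x s' + t * d s') - 2 * (x s + t * d s) * (x s' + t * d s'))
      = (∑ s, ∑ s' ∈ Finset.univ.erase s, w s s' * (x s + x s' - 2 * x s * x s'))
        + t * (∑ s, ∑ s' ∈ Finset.univ.erase s,
            w s s' * (d s + d s' - 2 * (x s * d s' + x s' * d s)))
        + t ^ 2 * (∑ s, ∑ s' ∈ Finset.univ.erase s, (-2) * (w s s' * (d s * d s'))) := by
    rw [Finset.sum_congr rfl (fun s _ => Finset.sum_congr rfl (fun s' _ => hterm s s'))]
    simp only [Finset.sum_add_distrib, ← Finset.mul_sum]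
  have hdef : quadCut w (fun s => x s + t * d s)
      = (∑ s, ∑ s' ∈ Finset.univ.erase s,
          w s s' * ((x s + t * d s) + (x s' + t * d s')
            - 2 * (x s + t * d s) * (x s' + t * d s'))) / 2 := rfl
  rw [hdef, key, hC, quadCut]
  ring

/-- The point represented by a list of weighted bases. -/
noncomputable def listX (l : List (ℝ × Finset V)) : V → ℝ :=
  fun s => (l.map (fun p => p.1 * (if s ∈ p.2 then (1 : ℝ) else 0))).sum

/-- Inner induction measure: symmetric difference of the first two sets. -/
def innerM : List (ℝ × Finset V) → ℕ
  | p₁ :: p₂ :: _ => (symmDiff p₁.2 p₂.2).card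
  | _ => 0

lemma innerM_le (l : List (ℝ × Finset V)) : innerM l ≤ Fintype.card V := by
  match l with
  | [] => simp [innerM]
  | [p] => simp [innerM]
  | p₁ :: p₂ :: t => exact Finset.card_le_univ _

end Aux

theorem matroid_quadratic_no_gap {V : Type*} [Fintype V] [DecidableEq V]
    (M : Matroid V) (hME : M.E = Set.univ)
    (w : V → V → ℝ) (hsymm : ∀ u v, w u v = w v u) (hnonneg : ∀ u v, 0 ≤ w u v)
    (x : V → ℝ)
    (hx : x ∈ convexHull ℝ
      {y : V → ℝ | ∃ B : Finset V, M.IsBase (B : Set V) ∧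
        y = fun v => if v ∈ B then (1 : ℝ) else 0}) :
    ∃ B : Finset V, M.IsBase (B : Set V) ∧ quadCut w x ≤ cutVal w B := by
  classical
  -- main pipage-rounding induction on a list representation of a convex combination
  have main : ∀ (N : ℕ) (l : List (ℝ × Finset V)),
      l.length * (Fintype.card V + 1) + innerM l ≤ N →
      (∀ p ∈ l, 0 ≤ p.1 ∧ M.IsBase ((p.2 : Finset V) : Set V)) →
      (l.map Prod.fst).sum = 1 →
      ∃ B : Finset V, M.IsBase (B : Set V) ∧ quadCut w (listX l) ≤ cutVal w B := by
    intro N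
    induction N using Nat.strong_induction_on with
    | _ N ih =>
    intro l hμ hcond hsum
    match l with
    | [] => simp at hsum
    | [p] =>
      have hp := hcond p (by simp)
      have hp1 : p.1 = 1 := by simpa using hsum
      have hX : listX [p] = fun s => if s ∈ p.2 then (1 : ℝ) else 0 := by
        funext s; simp [listX, hp1]
      exact ⟨p.2, hp.2, le_of_eq (by rw [hX, quadCut_indicator_aux w hsymm])⟩
    | (a, B₁) :: (b, B₂) :: t =>
      set K := Fintype.card V + 1 with hK
      have hμ' : (t.length + 2) * K + (symmDiff B₁ B₂).card ≤ N := by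
        simpa [innerM, List.length, hK] using hμ
      -- a helper to recurse
      have hrec : ∀ l' : List (ℝ × Finset V),
          l'.length * K + innerM l' < (t.length + 2) * K + (symmDiff B₁ B₂).card →
          (∀ p ∈ l', 0 ≤ p.1 ∧ M.IsBase ((p.2 : Finset V) : Set V)) →
          (l'.map Prod.fst).sum = 1 →
          ∃ B : Finset V, M.IsBase (B : Set V) ∧ quadCut w (listX l') ≤ cutVal w B := by
        intro l' hlt hc hs
        exact ih (l'.length * K + innerM l') (lt_of_lt_of_le hlt hμ') l' le_rfl hc hs
      have hcond₁ := hcond (a, B₁) (by simp)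
      have hcond₂ := hcond (b, B₂) (by simp)
      have hcondt : ∀ p ∈ t, 0 ≤ p.1 ∧ M.IsBase ((p.2 : Finset V) : Set V) := by
        intro p hp; exact hcond p (by simp [hp])
      by_cases hB : B₁ = B₂
      · -- merge equal bases
        subst hB
        obtain ⟨B, hBb, hle⟩ := hrec ((a + b, B₁) :: t)
          (by
            have h1 : innerM ((a + b, B₁) :: t) ≤ Fintype.card V := innerM_le _
            have e1 : ((a + b, B₁) :: t).length = t.length + 1 := by simp
            have e2 : (t.length + 2) * K = (t.length + 1) * K + K := by ring
            rw [e1, e2]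
            omega)
          (by
            intro p hp
            rcases List.mem_cons.1 hp with rfl | hp
            · exact ⟨add_nonneg hcond₁.1 hcond₂.1, hcond₁.2⟩
            · exact hcondt p hp)
          (by
            simp only [List.map_cons, List.sum_cons] at hsum ⊢
            linarith)
        refine ⟨B, hBb, ?_⟩
        have hXeq : listX ((a + b, B₁) :: t) = listX ((a, B₁) :: (b, B₁) :: t) := by
          funext s
          simp only [listX, List.map_cons, List.sum_cons]
          ring
        rwa [hXeq] at hle
      by_cases ha0 : a = 0
      · -- drop the first entry
        obtain ⟨B, hBb, hle⟩ := hrec ((b, B₂) :: t)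
          (by
            have h1 : innerM ((b, B₂) :: t) ≤ Fintype.card V := innerM_le _
            have e1 : ((b, B₂) :: t).length = t.length + 1 := by simp
            have e2 : (t.length + 2) * K = (t.length + 1) * K + K := by ring
            rw [e1, e2]
            omega)
          (by intro p hp; rcases List.mem_cons.1 hp with rfl | hp
              · exact hcond₂
              · exact hcondt p hp)
          (by simp only [List.map_cons, List.sum_cons] at hsum ⊢; rw [ha0] at hsum; linarith)
        refine ⟨B, hBb, ?_⟩
        have hXeq : listX ((b, B₂) :: t) = listX ((a, B₁) :: (b, B₂) :: t) := by
          funext s; simp [listX, ha0]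
        rwa [hXeq] at hle
      by_cases hb0 : b = 0
      · -- drop the second entry
        obtain ⟨B, hBb, hle⟩ := hrec ((a, B₁) :: t)
          (by
            have h1 : innerM ((a, B₁) :: t) ≤ Fintype.card V := innerM_le _
            have e1 : ((a, B₁) :: t).length = t.length + 1 := by simp
            have e2 : (t.length + 2) * K = (t.length + 1) * K + K := by ring
            rw [e1, e2]
            omega)
          (by intro p hp; rcases List.mem_cons.1 hp with rfl | hp
              · exact hcond₁
              · exact hcondt p hp)
          (by simp only [List.map_cons, List.sum_cons] at hsum ⊢; rw [hb0] at hsum; linarith)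
        refine ⟨B, hBb, ?_⟩
        have hXeq : listX ((a, B₁) :: t) = listX ((a, B₁) :: (b, B₂) :: t) := by
          funext s; simp [listX, hb0]
        rwa [hXeq] at hle
      · -- the pipage step
        have ha : 0 < a := lt_of_le_of_ne hcond₁.1 (Ne.symm ha0)
        have hb : 0 < b := lt_of_le_of_ne hcond₂.1 (Ne.symm hb0)
        have hbase₁ : M.IsBase ((B₁ : Finset V) : Set V) := hcond₁.2
        have hbase₂ : M.IsBase ((B₂ : Finset V) : Set V) := hcond₂.2
        -- find an exchange pair
        obtain ⟨u, huB₁, huB₂⟩ : ∃ u, u ∈ B₁ ∧ u ∉ B₂ := by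
          by_contra h
          push_neg at h
          exact hB (Finset.coe_injective
            (hbase₁.eq_of_subset_isBase hbase₂ (by exact_mod_cast fun s hs => h s hs)))
        have hu' : u ∈ ((B₁ : Set V) \ (B₂ : Set V)) := ⟨huB₁, huB₂⟩
        obtain ⟨v, hv, hbA, hbB⟩ := symm_exchange_aux hbase₁ hbase₂ B₂.finite_toSet hu'
        have hvB₂ : v ∈ B₂ := hv.1
        have hvB₁ : v ∉ B₁ := hv.2
        have huv : u ≠ v := fun h => huB₂ (h ▸ hvB₂)
        set B₁' : Finset V := insert v (B₁.erase u) with hB₁'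
        set B₂' : Finset V := insert u (B₂.erase v) with hB₂'
        have hbase₁' : M.IsBase ((B₁' : Finset V) : Set V) := by
          have : ((B₁' : Finset V) : Set V) = insert v ((B₁ : Set V) \ {u}) := by
            simp [hB₁', Finset.coe_insert, Finset.coe_erase]
          rw [this]; exact hbA
        have hbase₂' : M.IsBase ((B₂' : Finset V) : Set V) := by
          have : ((B₂' : Finset V) : Set V) = insert u ((B₂ : Set V) \ {v}) := by
            simp [hB₂', Finset.coe_insert, Finset.coe_erase]
          rw [this]; exact hbB
        set d : V → ℝ := fun s => (if s = v then (1 : ℝ) else 0) - (if s = u then 1 else 0)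
          with hd
        have hdu : d u = -1 := by simp [hd, if_neg huv]
        have hdv : d v = 1 := by simp [hd, if_neg (Ne.symm huv)]
        have hd0 : ∀ s, s ≠ u → s ≠ v → d s = 0 := by
          intro s h1 h2; simp [hd, if_neg h1, if_neg h2]
        have ind₁ : ∀ s, (if s ∈ B₁' then (1 : ℝ) else 0) = (if s ∈ B₁ then 1 else 0) + d s := by
          intro s
          by_cases h1 : s = u
          · subst h1
            simp [hB₁', Finset.mem_insert, Finset.mem_erase, huv, huB₁, hdu]
          by_cases h2 : s = v
          · subst h2
            simp [hB₁', Finset.mem_insert, hvB₁, hdv]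
          · rw [hd0 s h1 h2]
            have : s ∈ B₁' ↔ s ∈ B₁ := by
              simp [hB₁', Finset.mem_insert, Finset.mem_erase, h1, h2]
            by_cases h3 : s ∈ B₁
            · rw [if_pos (this.2 h3), if_pos h3]; ring
            · rw [if_neg (fun hc => h3 (this.1 hc)), if_neg h3]; ring
        have ind₂ : ∀ s, (if s ∈ B₂' then (1 : ℝ) else 0) = (if s ∈ B₂ then 1 else 0) - d s := by
          intro s
          by_cases h1 : s = u
          · subst h1
            simp [hB₂', Finset.mem_insert, huB₂, hdu]
          by_cases h2 : s = v
          · subst h2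
            simp [hB₂', Finset.mem_insert, Finset.mem_erase, Ne.symm huv, hvB₂, hdv]
          · rw [hd0 s h1 h2]
            have : s ∈ B₂' ↔ s ∈ B₂ := by
              simp [hB₂', Finset.mem_insert, Finset.mem_erase, h1, h2]
            by_cases h3 : s ∈ B₂
            · rw [if_pos (this.2 h3), if_pos h3]; ring
            · rw [if_neg (fun hc => h3 (this.1 hc)), if_neg h3]; ring
        set x₀ : V → ℝ := listX ((a, B₁) :: (b, B₂) :: t) with hx₀
        have hxA : listX ((a, B₁') :: (b, B₂) :: t) = fun s => x₀ s + a * d s := by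
          funext s
          simp only [hx₀, listX, List.map_cons, List.sum_cons, ind₁ s]
          ring
        have hxB : listX ((a, B₁) :: (b, B₂') :: t) = fun s => x₀ s + (-b) * d s := by
          funext s
          simp only [hx₀, listX, List.map_cons, List.sum_cons, ind₂ s]
          ring
        obtain ⟨L, hL⟩ := quadCut_poly_aux w hsymm x₀ u v huv d hdu hdv hd0
        -- symmetric difference decreases for either move
        have hmemu : u ∈ symmDiff B₁ B₂ := Finset.mem_symmDiff.2 (Or.inl ⟨huB₁, huB₂⟩)
        have hssA : (symmDiff B₁' B₂).card < (symmDiff B₁ B₂).card := by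
          apply Finset.card_lt_card
          rw [Finset.ssubset_iff_of_subset ?_]
          · refine ⟨u, hmemu, ?_⟩
            simp only [Finset.mem_symmDiff, hB₁', Finset.mem_insert, Finset.mem_erase]
            tauto
          · intro s hs
            simp only [Finset.mem_symmDiff, hB₁', Finset.mem_insert, Finset.mem_erase] at hs ⊢
            by_cases h1 : s = u
            · subst h1; tauto
            by_cases h2 : s = v
            · subst h2; tauto
            · tauto
        have hssB : (symmDiff B₁ B₂').card < (symmDiff B₁ B₂).card := by
          apply Finset.card_lt_card
          rw [Finset.ssubset_iff_of_subset ?_]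
          · refine ⟨u, hmemu, ?_⟩
            simp only [Finset.mem_symmDiff, hB₂', Finset.mem_insert, Finset.mem_erase]
            tauto
          · intro s hs
            simp only [Finset.mem_symmDiff, hB₂', Finset.mem_insert, Finset.mem_erase] at hs ⊢
            by_cases h1 : s = u
            · subst h1; tauto
            by_cases h2 : s = v
            · subst h2; tauto
            · tauto
        have hcondA : ∀ p ∈ (a, B₁') :: (b, B₂) :: t, 0 ≤ p.1 ∧ M.IsBase ((p.2 : Finset V) : Set V) := by
          intro p hp
          rcases List.mem_cons.1 hp with rfl | hp
          · exact ⟨le_of_lt ha, hbase₁'⟩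
          rcases List.mem_cons.1 hp with rfl | hp
          · exact hcond₂
          · exact hcondt p hp
        have hcondB : ∀ p ∈ (a, B₁) :: (b, B₂') :: t, 0 ≤ p.1 ∧ M.IsBase ((p.2 : Finset V) : Set V) := by
          intro p hp
          rcases List.mem_cons.1 hp with rfl | hp
          · exact hcond₁
          rcases List.mem_cons.1 hp with rfl | hp
          · exact ⟨le_of_lt hb, hbase₂'⟩
          · exact hcondt p hp
        have hsumA : (((a, B₁') :: (b, B₂) :: t).map Prod.fst).sum = 1 := by
          simpa using hsum
        have hsumB : (((a, B₁) :: (b, B₂') :: t).map Prod.fst).sum = 1 := by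
          simpa using hsum
        rcases le_or_gt 0 L with hL0 | hL0
        · obtain ⟨B, hBb, hle⟩ := hrec ((a, B₁') :: (b, B₂) :: t)
            (by
              have e1 : ((a, B₁') :: (b, B₂) :: t).length = t.length + 2 := by simp
              simp only [innerM, e1]
              omega) hcondA hsumA
          refine ⟨B, hBb, le_trans ?_ hle⟩
          rw [hxA, hL a]
          nlinarith [hnonneg u v, sq_nonneg a]
        · obtain ⟨B, hBb, hle⟩ := hrec ((a, B₁) :: (b, B₂') :: t)
            (by
              have e1 : ((a, B₁) :: (b, B₂') :: t).length = t.length + 2 := by simp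
              simp only [innerM, e1]
              omega) hcondB hsumB
          refine ⟨B, hBb, le_trans ?_ hle⟩
          rw [hxB, hL (-b)]
          nlinarith [hnonneg u v, sq_nonneg b]
  -- convert the convex hull membership into a list representation
  rw [_root_.convexHull_eq] at hx
  obtain ⟨ι, tf, wt, z, hw0, hw1, hz, hcm⟩ := hx
  have hz' : ∀ i : {i // i ∈ tf}, ∃ B : Finset V, M.IsBase (B : Set V) ∧
      z i.1 = fun s => if s ∈ B then (1 : ℝ) else 0 := fun i => hz i.1 i.2
  choose Bf hBf hzB using hz'
  set l : List (ℝ × Finset V) := tf.attach.toList.map (fun i => (wt i.1, Bf i)) with hl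
  have hsum : (l.map Prod.fst).sum = 1 := by
    rw [hl, List.map_map]
    show (tf.attach.toList.map fun i => wt i.1).sum = 1
    rw [Finset.sum_map_toList, Finset.sum_attach tf (fun i => wt i)]
    exact hw1
  have hcond : ∀ p ∈ l, 0 ≤ p.1 ∧ M.IsBase ((p.2 : Finset V) : Set V) := by
    intro p hp
    rw [hl, List.mem_map] at hp
    obtain ⟨i, _, rfl⟩ := hp
    exact ⟨hw0 i.1 i.2, hBf i⟩
  have hXx : listX l = x := by
    funext s
    rw [listX, hl, List.map_map]
    show (tf.attach.toList.map fun i => wt i.1 * (if s ∈ Bf i then (1:ℝ) else 0)).sum = x s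
    rw [Finset.sum_map_toList]
    have : ∀ i : {i // i ∈ tf}, wt i.1 * (if s ∈ Bf i then (1:ℝ) else 0) = wt i.1 * z i.1 s := by
      intro i; rw [hzB i]
    rw [Finset.sum_congr rfl (fun i _ => this i)]
    rw [Finset.sum_attach tf (fun i => wt i * z i s)]
    rw [← hcm, Finset.centerMass_eq_of_sum_1 _ _ hw1]
    simp [Finset.sum_apply]
  obtain ⟨B, hBb, hle⟩ := main (l.length * (Fintype.card V + 1) + innerM l) l le_rfl hcond hsum
  exact ⟨B, hBb, by rwa [hXx] at hle⟩
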